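/- (Theorem 3.4) Let X and Y be strong partitive sets of an undirected graph G = (V,E) with X ∩ Y = ∅. If Â and B̂ are color classes of G each containing an edge with one endpoint in X and the other endpoint in Y, then Â = B̂; that is, X and Y can be related to each other by at most one color class. -/

import Mathlib

open Set

namespace TransOrient

variable {V : Type*}

/-- `E` is the edge set of an undirected graph on the vertex type `V`:
an irreflexive and symmetric relation, given as a set of ordered pairs. -/
def IsGraph (E : Set (V × V)) : Prop :=
  (∀ a : V, (a, a) ∉ E) ∧ (∀ a b : V, (a, b) ∈ E ↔ (b, a) ∈ E)

/-- The forcing relation `Γ` on directed edges: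
`(a,b) Γ (a',b')` iff (`a = a'` and `(b,b') ∉ E`) or (`b = b'` and `(a,a') ∉ E`). -/
def Gamma (E : Set (V × V)) (e e' : V × V) : Prop :=
  e ∈ E ∧ e' ∈ E ∧
    ((e.1 = e'.1 ∧ (e.2, e'.2) ∉ E) ∨ (e.2 = e'.2 ∧ (e.1, e'.1) ∉ E))

/-- The implication classes of `G = (V,E)`: equivalence classes on `E` of
the reflexive-transitive closure of `Γ`. -/
def IsImplicationClass (E : Set (V × V)) (A : Set (V × V)) : Prop :=
  ∃ e ∈ E, A = {e' | Relation.ReflTransGen (Gamma E) e e'}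

/-- `A⁻¹ = {(b,a) : (a,b) ∈ A}`. -/
def inv (A : Set (V × V)) : Set (V × V) := {p | (p.2, p.1) ∈ A}

/-- The color class `Â = A ∪ A⁻¹` of an implication class `A`. -/
def hat (A : Set (V × V)) : Set (V × V) := A ∪ inv A

/-- `Ã`: the set of vertices incident to an edge of `A`. -/
def tilde (A : Set (V × V)) : Set V := {v | ∃ w, (v, w) ∈ A ∨ (w, v) ∈ A}

/-- A transitive orientation `E'` of a symmetric edge set `F`:
`E' ⊆ F`, `E' ∩ E'⁻¹ = ∅`, `E' ∪ E'⁻¹ = F` and `E'` is transitive. -/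
def IsTransOrientation (F E' : Set (V × V)) : Prop :=
  E' ⊆ F ∧ E' ∩ inv E' = ∅ ∧ E' ∪ inv E' = F ∧
    ∀ a b c : V, (a, b) ∈ E' → (b, c) ∈ E' → (a, c) ∈ E'

/-- `G` is a comparability graph if `E` admits a transitive orientation. -/
def IsComparability (E : Set (V × V)) : Prop :=
  ∃ E' : Set (V × V), IsTransOrientation E E'

/-- `E(X)`: the set of edges of `E` with both endpoints in `X`. -/
def edgesOn (E : Set (V × V)) (X : Set V) : Set (V × V) :=
  {p ∈ E | p.1 ∈ X ∧ p.2 ∈ X}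

/-- `X` is a partitive set of `G = (V,E)`. -/
def IsPartitive (E : Set (V × V)) (X : Set V) : Prop :=
  ∀ a ∈ X, ∀ b ∈ X, ∀ c ∉ X, ((a, c) ∈ E ↔ (b, c) ∈ E)

/-- `X` is a "strong" partitive set of `G = (V,E)`. -/
def IsStrongPartitive (E : Set (V × V)) (X : Set V) : Prop :=
  IsPartitive E X ∧
    ∀ Y : Set V, IsPartitive E Y → (Y ∩ X).Nonempty → X ⊆ Y ∨ Y ⊆ X

/-- `X` is a maximal "strong" partitive set of `G = (V,E)`: a strong partitive
set different from `V` which is maximal, for inclusion, among the strong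
partitive sets different from `V`. -/
def IsMaxStrongPartitive (E : Set (V × V)) (X : Set V) : Prop :=
  IsStrongPartitive E X ∧ X ≠ Set.univ ∧
    ∀ Y : Set V, IsStrongPartitive E Y → Y ≠ Set.univ → X ⊆ Y → X = Y

/-- `X` is a partitive set of the induced subgraph `G(W) = (W, E(W))`. -/
def IsPartitiveIn (E : Set (V × V)) (W : Set V) (X : Set V) : Prop :=
  X ⊆ W ∧ ∀ a ∈ X, ∀ b ∈ X, ∀ c ∈ W \ X,
    ((a, c) ∈ edgesOn E W ↔ (b, c) ∈ edgesOn E W)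

/-- `X` is a "strong" partitive set of the induced subgraph `G(W)`. -/
def IsStrongPartitiveIn (E : Set (V × V)) (W : Set V) (X : Set V) : Prop :=
  IsPartitiveIn E W X ∧
    ∀ Y : Set V, IsPartitiveIn E W Y → (Y ∩ X).Nonempty → X ⊆ Y ∨ Y ⊆ X

/-- `X` is a maximal "strong" partitive set of the induced subgraph `G(W)`. -/
def IsMaxStrongPartitiveIn (E : Set (V × V)) (W : Set V) (X : Set V) : Prop :=
  IsStrongPartitiveIn E W X ∧ X ≠ W ∧
    ∀ Y : Set V, IsStrongPartitiveIn E W Y → Y ≠ W → X ⊆ Y → X = Y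

/-- Two directed edges lie in the same color class of `G = (V,E)`. -/
def SameColor (E : Set (V × V)) (e e' : V × V) : Prop :=
  ∃ A : Set (V × V), IsImplicationClass E A ∧ e ∈ hat A ∧ e' ∈ hat A

/-- A simplex of `G = (V,E)` given by its (finite, nonempty) vertex set `VS`:
a complete induced subgraph whose edges, for distinct unordered pairs,
lie in distinct color classes of `G`. -/
def IsSimplex (E : Set (V × V)) (VS : Set V) : Prop :=
  VS.Finite ∧ VS.Nonempty ∧
    (∀ a ∈ VS, ∀ b ∈ VS, a ≠ b → (a, b) ∈ E) ∧
    (∀ a ∈ VS, ∀ b ∈ VS, ∀ c ∈ VS, ∀ d ∈ VS, a ≠ b → c ≠ d →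
      SameColor E (a, b) (c, d) → (a = c ∧ b = d) ∨ (a = d ∧ b = c))

/-- The rank of a simplex on `r+1` vertices is `r`. -/
noncomputable def simplexRank (VS : Set V) : ℕ := VS.ncard - 1

/-- A maximal simplex: its vertex set is not properly contained in the
vertex set of another simplex. -/
def IsMaxSimplex (E : Set (V × V)) (VS : Set V) : Prop :=
  IsSimplex E VS ∧ ∀ VS' : Set V, IsSimplex E VS' → VS ⊆ VS' → VS = VS'

/-- The multiplex `M(S)` generated by a simplex with vertex set `VS`:
the union of all color classes of `G` containing an edge of the simplex. -/
def multiplex (E : Set (V × V)) (VS : Set V) : Set (V × V) :=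
  {e | ∃ A : Set (V × V), IsImplicationClass E A ∧ e ∈ hat A ∧
    ∃ a ∈ VS, ∃ b ∈ VS, a ≠ b ∧ (a, b) ∈ hat A}

/-- A maximal multiplex of `G`: a multiplex generated by a maximal simplex. -/
def IsMaxMultiplex (E : Set (V × V)) (M : Set (V × V)) : Prop :=
  ∃ VS : Set V, IsMaxSimplex E VS ∧ M = multiplex E VS

/-- `P` is a partition of the set `W`. -/
def IsPartitionOf (W : Set V) (P : Set (Set V)) : Prop :=
  (∀ X ∈ P, X.Nonempty) ∧ ⋃₀ P = W ∧
    ∀ X ∈ P, ∀ Y ∈ P, X ≠ Y → X ∩ Y = ∅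

/-- Adjacency in the quotient of the induced subgraph `G(W)` by a partition:
two distinct blocks are adjacent iff some pair of representatives is an
edge of `E(W)`. -/
def quotAdj (E : Set (V × V)) (W : Set V) (X Y : Set V) : Prop :=
  X ≠ Y ∧ ∃ x ∈ X, ∃ y ∈ Y, (x, y) ∈ edgesOn E W

/-- A partitive set of an abstract graph with vertex set `W` and adjacency
relation `Adj`. -/
def IsPartitiveGen {α : Type*} (W : Set α) (Adj : α → α → Prop) (X : Set α) : Prop :=
  X ⊆ W ∧ ∀ a ∈ X, ∀ b ∈ X, ∀ c ∈ W \ X, (Adj a c ↔ Adj b c)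

/-- An abstract graph `(W, Adj)` is indecomposable if all its partitive
sets are trivial. -/
def IndecomposableGen {α : Type*} (W : Set α) (Adj : α → α → Prop) : Prop :=
  ∀ X : Set α, IsPartitiveGen W Adj X → X.Subsingleton ∨ X = W

/-- An isomorphism between the graphs `(Vα, Aα)` and `(Vβ, Aβ)`:
a bijection of the vertex sets preserving adjacency in both directions. -/
def GraphIso {α β : Type*} (Vα : Set α) (Aα : α → α → Prop)
    (Vβ : Set β) (Aβ : β → β → Prop) : Prop :=
  ∃ f : α → β, Set.BijOn f Vα Vβ ∧
    ∀ a ∈ Vα, ∀ b ∈ Vα, (Aα a b ↔ Aβ (f a) (f b))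

/-- `(V', E')` is a subgraph of the induced subgraph `G(W)` of `G = (V,E)`. -/
def IsSubgraphOf (E : Set (V × V)) (W : Set V) (V' : Set V) (E' : Set (V × V)) : Prop :=
  V' ⊆ W ∧ E' ⊆ edgesOn E W ∧ (∀ e ∈ E', e.1 ∈ V' ∧ e.2 ∈ V') ∧
    (∀ a b : V, (a, b) ∈ E' ↔ (b, a) ∈ E')

end TransOrient

section Aux
open TransOrient

variable {V : Type*} {E : Set (V × V)}

/-- Same implication class relation. -/
abbrev Rg (E : Set (V × V)) : V × V → V × V → Prop := Relation.ReflTransGen (Gamma E)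

/-- Same color class relation. -/
abbrev Hg (E : Set (V × V)) (e e' : V × V) : Prop := Rg E e e' ∨ Rg E e (Prod.swap e')

lemma Gamma_symm (hG : IsGraph E) {e e' : V × V} (h : Gamma E e e') : Gamma E e' e := by
  obtain ⟨h1, h2, h3 | h3⟩ := h
  · exact ⟨h2, h1, Or.inl ⟨h3.1.symm, fun hh => h3.2 ((hG.2 _ _).mp hh)⟩⟩
  · exact ⟨h2, h1, Or.inr ⟨h3.1.symm, fun hh => h3.2 ((hG.2 _ _).mp hh)⟩⟩

lemma Gamma_swap (hG : IsGraph E) {e e' : V × V} (h : Gamma E e e') :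
    Gamma E e.swap e'.swap := by
  obtain ⟨h1, h2, h3 | h3⟩ := h
  · exact ⟨(hG.2 _ _).mp h1, (hG.2 _ _).mp h2, Or.inr h3⟩
  · exact ⟨(hG.2 _ _).mp h1, (hG.2 _ _).mp h2, Or.inl h3⟩

lemma Rg_symm (hG : IsGraph E) {e e' : V × V} (h : Rg E e e') : Rg E e' e :=
  (@Relation.ReflTransGen.symmetric _ _ ⟨fun _ _ hh => Gamma_symm hG hh⟩).symm _ _ h

lemma Rg_swap (hG : IsGraph E) {e e' : V × V} (h : Rg E e e') : Rg E e.swap e'.swap :=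
  Relation.ReflTransGen.lift Prod.swap (fun _ _ hh => Gamma_swap hG hh) _ _ h

lemma Rg_mem {e e' : V × V} (he : e ∈ E) (h : Rg E e e') : e' ∈ E := by
  induction h with
  | refl => exact he
  | tail _ h2 _ => exact h2.2.1

lemma Hg_refl (e : V × V) : Hg E e e := Or.inl Relation.ReflTransGen.refl

lemma Hg_symm (hG : IsGraph E) {e e' : V × V} (h : Hg E e e') : Hg E e' e := by
  rcases h with h | h
  · exact Or.inl (Rg_symm hG h)
  · exact Or.inr (Rg_swap hG (Rg_symm hG h))

lemma Hg_trans (hG : IsGraph E) {e e' e'' : V × V} (h1 : Hg E e e') (h2 : Hg E e' e'') :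
    Hg E e e'' := by
  rcases h1 with h1 | h1 <;> rcases h2 with h2 | h2
  · exact Or.inl (h1.trans h2)
  · exact Or.inr (h1.trans h2)
  · exact Or.inr (h1.trans (Rg_swap hG h2))
  · exact Or.inl (h1.trans (Rg_swap hG h2))

lemma Hg_swap (hG : IsGraph E) {e e' : V × V} (h : Hg E e e') : Hg E e.swap e'.swap := by
  rcases h with h | h
  · exact Or.inl (Rg_swap hG h)
  · exact Or.inr (Rg_swap hG h)

lemma Hg_mem (hG : IsGraph E) {e e' : V × V} (he : e ∈ E) (h : Hg E e e') : e' ∈ E := by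
  rcases h with h | h
  · exact Rg_mem he h
  · exact (hG.2 _ _).mp (Rg_mem he h)

lemma Hg_step1 (hG : IsGraph E) {e : V × V} {p q q' : V}
    (h : Hg E e (p, q)) (hpq : (p, q) ∈ E) (hqq : (q, q') ∉ E) (hpq' : (p, q') ∈ E) :
    Hg E e (p, q') := by
  rcases h with h | h
  · exact Or.inl (h.tail ⟨hpq, hpq', Or.inl ⟨rfl, hqq⟩⟩)
  · exact Or.inr (h.tail ⟨(hG.2 p q).mp hpq, (hG.2 p q').mp hpq', Or.inr ⟨rfl, hqq⟩⟩)

lemma Hg_step2 (hG : IsGraph E) {e : V × V} {p p' q : V}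
    (h : Hg E e (p, q)) (hpq : (p, q) ∈ E) (hpp : (p, p') ∉ E) (hp'q : (p', q) ∈ E) :
    Hg E e (p', q) := by
  rcases h with h | h
  · exact Or.inl (h.tail ⟨hpq, hp'q, Or.inr ⟨rfl, hpp⟩⟩)
  · exact Or.inr (h.tail ⟨(hG.2 p q).mp hpq, (hG.2 p' q).mp hp'q, Or.inl ⟨rfl, hpp⟩⟩)

lemma Rg_internal (hG : IsGraph E) {X : Set V} (hX : IsPartitive E X)
    {e e' : V × V} (he : e ∈ E) (h1 : e.1 ∈ X) (h2 : e.2 ∈ X) (h : Rg E e e') :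
    e'.1 ∈ X ∧ e'.2 ∈ X ∧ e' ∈ E := by
  induction h with
  | refl => exact ⟨h1, h2, he⟩
  | tail hr hg ih =>
    obtain ⟨ih1, ih2, ihE⟩ := ih
    obtain ⟨hbE, hcE, hc | hc⟩ := hg
    · refine ⟨hc.1 ▸ ih1, ?_, hcE⟩
      by_contra hx
      have hiff := hX _ ih1 _ ih2 _ hx
      have hE1 : (_, _) ∈ E := hcE
      rw [← hc.1] at hE1
      exact hc.2 (hiff.mp hE1)
    · refine ⟨?_, hc.1 ▸ ih2, hcE⟩
      by_contra hx
      have hiff := hX _ ih1 _ ih2 _ hx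
      have hE1 : (_, _) ∈ E := (hG.2 _ _).mp hcE
      rw [← hc.1] at hE1
      exact hc.2 (hiff.mpr hE1)

lemma Hg_internal (hG : IsGraph E) {X : Set V} (hX : IsPartitive E X)
    {e e' : V × V} (he : e ∈ E) (h1 : e.1 ∈ X) (h2 : e.2 ∈ X) (h : Hg E e e') :
    e'.1 ∈ X ∧ e'.2 ∈ X ∧ e' ∈ E := by
  rcases h with h | h
  · exact Rg_internal hG hX he h1 h2 h
  · obtain ⟨a1, a2, aE⟩ := Rg_internal hG hX he h1 h2 h
    exact ⟨a2, a1, (hG.2 _ _).mp aE⟩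

lemma triangle (hG : IsGraph E) {a b c : V}
    (hbc : (b, c) ∈ E) (hab : (a, b) ∈ E) (hac : (a, c) ∈ E)
    (hB : ¬ Hg E (b, c) (a, b)) (hC : ¬ Hg E (b, c) (a, c)) :
    ∀ e' : V × V, Rg E (b, c) e' →
      (a, e'.1) ∈ E ∧ Hg E (a, b) (a, e'.1) ∧ (a, e'.2) ∈ E ∧ Hg E (a, c) (a, e'.2) := by
  intro e' h
  induction h with
  | refl => exact ⟨hab, Hg_refl _, hac, Hg_refl _⟩
  | @tail m n hr hg ih =>
    obtain ⟨ih1, ih2, ih3, ih4⟩ := ih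
    have hHn : Hg E (b, c) n := Or.inl (hr.tail hg)
    obtain ⟨hmE, hnE, hcase | hcase⟩ := hg
    · -- m.1 = n.1 and (m.2, n.2) ∉ E
      obtain ⟨h1, h2⟩ := hcase
      rw [h1] at ih1 ih2
      have han2 : (a, n.2) ∈ E := by
        by_contra hno
        have hstep : Hg E (b, c) (n.1, a) := by
          refine Hg_step1 hG (e := (b,c)) (p := n.1) (q := n.2) ?_ hnE ?_ ?_
          · exact hHn
          · exact fun hh => hno ((hG.2 _ _).mp hh)
          · exact (hG.2 _ _).mp ih1
        have hx : Hg E (b, c) (a, n.1) := by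
          rcases hstep with hs | hs
          · exact Or.inr hs
          · exact Or.inl hs
        exact hB (Hg_trans hG hx (Hg_symm hG ih2))
      refine ⟨ih1, ih2, han2, ?_⟩
      exact Hg_step1 hG ih4 ih3 h2 han2
    · -- m.2 = n.2 and (m.1, n.1) ∉ E
      obtain ⟨h1, h2⟩ := hcase
      rw [h1] at ih3 ih4
      have han1 : (a, n.1) ∈ E := by
        by_contra hno
        have hstep : Hg E (b, c) (a, n.2) := by
          refine Hg_step2 hG (e := (b,c)) (p := n.1) (q := n.2) ?_ hnE ?_ ?_
          · exact hHn
          · exact fun hh => hno ((hG.2 _ _).mp hh)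
          · exact ih3
        exact hC (Hg_trans hG hstep (Hg_symm hG ih4))
      refine ⟨han1, ?_, ih3, ih4⟩
      exact Hg_step1 hG ih2 ih1 h2 han1

lemma triangleH (hG : IsGraph E) {a b c : V}
    (hbc : (b, c) ∈ E) (hab : (a, b) ∈ E) (hac : (a, c) ∈ E)
    (hB : ¬ Hg E (b, c) (a, b)) (hC : ¬ Hg E (b, c) (a, c)) :
    ∀ p q : V, Hg E (b, c) (p, q) →
      ((a, p) ∈ E ∧ Hg E (a, b) (a, p) ∧ (a, q) ∈ E ∧ Hg E (a, c) (a, q)) ∨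
      ((a, q) ∈ E ∧ Hg E (a, b) (a, q) ∧ (a, p) ∈ E ∧ Hg E (a, c) (a, p)) := by
  intro p q h
  rcases h with h | h
  · exact Or.inl (triangle hG hbc hab hac hB hC (p, q) h)
  · exact Or.inr (triangle hG hbc hab hac hB hC (q, p) h)

lemma not_cross_int (hG : IsGraph E) {X : Set V} (hX : IsPartitive E X) {x y u w : V}
    (hy : y ∉ X) (hu : u ∈ X) (hw : w ∈ X) (huw : (u, w) ∈ E)
    (h : Hg E (x, y) (u, w)) : False :=
  hy (Hg_internal hG hX huw hu hw (Hg_symm hG h)).2.1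

lemma hv_not (hG : IsGraph E) {X : Set V} (hX : IsPartitive E X) {x y v : V}
    (hx : x ∈ X) (hy : y ∉ X) (he : (x, v) ∈ E) (h : Hg E (x, y) (x, v)) : v ∉ X := by
  intro hv
  exact not_cross_int hG hX hy hx hv he h

lemma crossStructure (hG : IsGraph E) {X : Set V} (hX : IsPartitive E X) {x1 x2 y : V}
    (hx1 : x1 ∈ X) (hx2 : x2 ∈ X) (hy : y ∉ X)
    (e1 : (x1, y) ∈ E) (e2 : (x2, y) ∈ E) (e12 : (x1, x2) ∈ E)
    (hne : ¬ Hg E (x1, y) (x2, y)) :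
    ∀ p q, Hg E (x1, y) (p, q) →
      (p ∈ X ∧ q ∉ X ∧ (x2, p) ∈ E ∧ Hg E (x2, x1) (x2, p) ∧ (x2, q) ∈ E ∧ Hg E (x2, y) (x2, q))
      ∨ (q ∈ X ∧ p ∉ X ∧ (x2, q) ∈ E ∧ Hg E (x2, x1) (x2, q) ∧ (x2, p) ∈ E ∧ Hg E (x2, y) (x2, p)) := by
  intro p q h
  have e21 : (x2, x1) ∈ E := (hG.2 _ _).mp e12
  have hBc : ¬ Hg E (x1, y) (x2, x1) := fun hh => not_cross_int hG hX hy hx2 hx1 e21 hh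
  rcases triangleH hG e1 e21 e2 hBc hne p q h with ⟨h1, h2, h3, h4⟩ | ⟨h1, h2, h3, h4⟩
  · exact Or.inl ⟨(Hg_internal hG hX e21 hx2 hx1 h2).2.1, hv_not hG hX hx2 hy h3 h4, h1, h2, h3, h4⟩
  · exact Or.inr ⟨(Hg_internal hG hX e21 hx2 hx1 h2).2.1, hv_not hG hX hx2 hy h3 h4, h1, h2, h3, h4⟩

lemma TtoTB (hG : IsGraph E) {X : Set V} (hX : IsPartitive E X) {x1 x2 y : V}
    (hx1 : x1 ∈ X) (hx2 : x2 ∈ X) (hy : y ∉ X)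
    (e1 : (x1, y) ∈ E) (e2 : (x2, y) ∈ E) (e12 : (x1, x2) ∈ E)
    (hne : ¬ Hg E (x1, y) (x2, y)) :
    ∀ v, (x1, v) ∈ E → Hg E (x1, y) (x1, v) → (x2, v) ∈ E ∧ Hg E (x2, y) (x2, v) := by
  intro v hv h
  rcases crossStructure hG hX hx1 hx2 hy e1 e2 e12 hne x1 v h with
    ⟨_, _, _, _, h5, h6⟩ | ⟨hvX, _, _, _, _, _⟩
  · exact ⟨h5, h6⟩
  · exact absurd hvX (hv_not hG hX hx1 hy hv h)

lemma rect (hG : IsGraph E) {X : Set V} (hX : IsPartitive E X) {x1 x2 y : V}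
    (hx1 : x1 ∈ X) (hx2 : x2 ∈ X) (hy : y ∉ X)
    (e1 : (x1, y) ∈ E) (e2 : (x2, y) ∈ E) (e12 : (x1, x2) ∈ E)
    (hne : ¬ Hg E (x1, y) (x2, y)) :
    ∀ u v0, v0 ∉ X → (u, v0) ∈ E → Hg E (x1, y) (u, v0) →
      ∀ v, (x1, v) ∈ E → Hg E (x1, y) (x1, v) → (u, v) ∈ E ∧ Hg E (x1, y) (u, v) := by
  intro u v0 hv0 huv0 h0 v hv hTv
  rcases crossStructure hG hX hx1 hx2 hy e1 e2 e12 hne u v0 h0 with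
    ⟨huX, _, hx2u, hDu, hx2v0, hBv0⟩ | ⟨hv0X, _, _, _, _, _⟩
  · have hux2 : (u, x2) ∈ E := (hG.2 _ _).mp hx2u
    have hTB := TtoTB hG hX hx1 hx2 hy e1 e2 e12 hne v hv hTv
    have hB1 : ¬ Hg E (x2, v0) (u, x2) := fun hh =>
      not_cross_int hG hX hy huX hx2 hux2 (Hg_trans hG hBv0 hh)
    have hC1 : ¬ Hg E (x2, v0) (u, v0) := fun hh =>
      hne (Hg_trans hG h0 (Hg_symm hG (Hg_trans hG hBv0 hh)))
    have hkey : Hg E (x2, v0) (x2, v) := Hg_trans hG (Hg_symm hG hBv0) hTB.2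
    rcases triangleH hG hx2v0 hux2 huv0 hB1 hC1 x2 v hkey with
      ⟨_, _, huvE, huvH⟩ | ⟨_, hbad, _, _⟩
    · exact ⟨huvE, Hg_trans hG h0 huvH⟩
    · exact absurd (Hg_internal hG hX hux2 huX hx2 hbad).2.1
        (hv_not hG hX hx1 hy hv hTv)
  · exact absurd hv0X hv0

lemma no_two_colors (hG : IsGraph E) {X : Set V} (hXs : IsStrongPartitive E X)
    {x1 x2 y : V} (hx1 : x1 ∈ X) (hx2 : x2 ∈ X) (hy : y ∉ X)
    (e1 : (x1, y) ∈ E) (e2 : (x2, y) ∈ E) (e12 : (x1, x2) ∈ E)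
    (hne : ¬ Hg E (x1, y) (x2, y)) : False := by
  obtain ⟨hX, hstrong⟩ := hXs
  have hne' : ¬ Hg E (x2, y) (x1, y) := fun h => hne (Hg_symm hG h)
  have e21 : (x2, x1) ∈ E := (hG.2 _ _).mp e12
  set T : Set V := {v | (x1, v) ∈ E ∧ Hg E (x1, y) (x1, v)} with hTdef
  set XA : Set V := {u | u ∈ X ∧ ∃ v, v ∉ X ∧ (u, v) ∈ E ∧ Hg E (x1, y) (u, v)} with hXAdef
  have hyT : y ∈ T := ⟨e1, Hg_refl _⟩
  have hx1A : x1 ∈ XA := ⟨hx1, y, hy, e1, Hg_refl _⟩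
  have hTnX : ∀ v ∈ T, v ∉ X := fun v hvT => hv_not hG hX hx1 hy hvT.1 hvT.2
  have RectA : ∀ u ∈ XA, ∀ v ∈ T, (u, v) ∈ E ∧ Hg E (x1, y) (u, v) := by
    rintro u ⟨huX, v0, hv0, huv0, h0⟩ v ⟨hv, hTv⟩
    exact rect hG hX hx1 hx2 hy e1 e2 e12 hne u v0 hv0 huv0 h0 v hv hTv
  have hTB : ∀ v ∈ T, (x2, v) ∈ E ∧ Hg E (x2, y) (x2, v) := fun v hvT =>
    TtoTB hG hX hx1 hx2 hy e1 e2 e12 hne v hvT.1 hvT.2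
  have TBtoT := TtoTB hG hX hx2 hx1 hy e2 e1 e21 hne'
  have RectB : ∀ u, u ∈ X → (∃ v, v ∉ X ∧ (u, v) ∈ E ∧ Hg E (x2, y) (u, v)) →
      ∀ v ∈ T, (u, v) ∈ E ∧ Hg E (x2, y) (u, v) := by
    rintro u huX ⟨v0, hv0, huv0, h0⟩ v hvT
    exact rect hG hX hx2 hx1 hy e2 e1 e21 hne' u v0 hv0 huv0 h0 v (hTB v hvT).1 (hTB v hvT).2
  have hnotB : ∀ u ∈ XA, ¬ ∃ v, v ∉ X ∧ (u, v) ∈ E ∧ Hg E (x2, y) (u, v) := by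
    intro u huA hEx
    have h1 := (RectA u huA y hyT).2
    have h2 := (RectB u huA.1 hEx y hyT).2
    exact hne (Hg_trans hG h1 (Hg_symm hG h2))
  have CS := crossStructure hG hX hx1 hx2 hy e1 e2 e12 hne
  have C1 : ∀ a ∈ XA, ∀ c, c ∉ XA → c ∉ T → (a, c) ∈ E → ∀ v ∈ T, (v, c) ∈ E := by
    intro a haA c hcA hcT hac v hvT
    by_contra hvc
    have h1 := RectA a haA v hvT
    have h2 : Hg E (x1, y) (a, c) := Hg_step1 hG h1.2 h1.1 hvc hac
    rcases CS a c h2 with ⟨_, _, _, _, hc1, hc2⟩ | ⟨_, hanX, _, _, _, _⟩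
    · exact hcT ⟨(TBtoT c hc1 hc2).1, (TBtoT c hc1 hc2).2⟩
    · exact hanX haA.1
  have C1b : ∀ a ∈ XA, ∀ b ∈ XA, ∀ c, c ∉ XA → c ∉ T → (a, c) ∈ E → (b, c) ∈ E := by
    intro a haA b hbA c hcA hcT hac
    by_contra hbc
    have hyc : (y, c) ∈ E := C1 a haA c hcA hcT hac y hyT
    have h1 := RectA b hbA y hyT
    have hcy : (c, y) ∈ E := (hG.2 _ _).mp hyc
    have h2 : Hg E (x1, y) (c, y) := Hg_step2 hG h1.2 h1.1 hbc hcy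
    rcases CS c y h2 with ⟨hcX, _, _, _, _, _⟩ | ⟨hyX, _, _, _, _, _⟩
    · exact hcA ⟨hcX, y, hy, hcy, h2⟩
    · exact hy hyX
  have C2 : ∀ a ∈ T, ∀ c, c ∉ XA → c ∉ T → (a, c) ∈ E → ∀ u ∈ XA, (u, c) ∈ E := by
    intro a haT c hcA hcT hac u huA
    by_contra huc
    have h1 := RectA u huA a haT
    have hca : (c, a) ∈ E := (hG.2 _ _).mp hac
    have h2 : Hg E (x1, y) (c, a) := Hg_step2 hG h1.2 h1.1 huc hca
    rcases CS c a h2 with ⟨hcX, _, _, _, _, _⟩ | ⟨haX, _, _, _, _, _⟩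
    · exact hcA ⟨hcX, a, hTnX a haT, hca, h2⟩
    · exact hTnX a haT haX
  have C2b : ∀ a ∈ T, ∀ b ∈ T, ∀ c, c ∉ XA → c ∉ T → (a, c) ∈ E → (b, c) ∈ E := by
    intro a haT b hbT c hcA hcT hac
    by_contra hbc
    have hx1c : (x1, c) ∈ E := C2 a haT c hcA hcT hac x1 hx1A
    have h2 : Hg E (x1, y) (x1, c) := Hg_step1 hG hbT.2 hbT.1 hbc hx1c
    exact hcT ⟨hx1c, h2⟩
  have hZone : ∀ a ∈ XA ∪ T, ∀ b ∈ XA ∪ T, ∀ c, c ∉ XA ∪ T → (a, c) ∈ E → (b, c) ∈ E := by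
    intro a ha b hb c hc hac
    have hcA : c ∉ XA := fun h => hc (Or.inl h)
    have hcT : c ∉ T := fun h => hc (Or.inr h)
    rcases ha with ha | ha <;> rcases hb with hb | hb
    · exact C1b a ha b hb c hcA hcT hac
    · exact C1 a ha c hcA hcT hac b hb
    · exact C2 a ha c hcA hcT hac b hb
    · exact C2b a ha b hb c hcA hcT hac
  have hZ : IsPartitive E (XA ∪ T) := by
    intro a ha b hb c hc
    exact ⟨fun h => hZone a ha b hb c hc h, fun h => hZone b hb a ha c hc h⟩
  rcases hstrong (XA ∪ T) hZ ⟨x1, Or.inl hx1A, hx1⟩ with hsub | hsub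
  · rcases hsub hx2 with h | h
    · exact hnotB x2 h ⟨y, hy, e2, Hg_refl _⟩
    · exact hTnX x2 h hx2
  · exact hy (hsub (Or.inr hyT))

lemma same_color_common (hG : IsGraph E) {X : Set V} (hXs : IsStrongPartitive E X)
    {x1 x2 y : V} (hx1 : x1 ∈ X) (hx2 : x2 ∈ X) (hy : y ∉ X)
    (e1 : (x1, y) ∈ E) (e2 : (x2, y) ∈ E) : Hg E (x1, y) (x2, y) := by
  by_cases h12 : (x1, x2) ∈ E
  · by_contra hne
    exact no_two_colors hG hXs hx1 hx2 hy e1 e2 h12 hne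
  · exact Or.inl (Relation.ReflTransGen.single ⟨e1, e2, Or.inr ⟨rfl, h12⟩⟩)

end Aux

open TransOrient in
/-- **(Theorem 3.4)** Two disjoint strong partitive sets are related to each
other by at most one color class. -/
theorem strong_partitive_related_by_at_most_one_color
    {V : Type*} (E : Set (V × V)) (hG : IsGraph E)
    (X Y : Set V) (hX : IsStrongPartitive E X) (hY : IsStrongPartitive E Y)
    (hdisj : X ∩ Y = ∅)
    (A B : Set (V × V)) (hA : IsImplicationClass E A) (hB : IsImplicationClass E B)
    (hAedge : ∃ x ∈ X, ∃ y ∈ Y, (x, y) ∈ hat A)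
    (hBedge : ∃ x ∈ X, ∃ y ∈ Y, (x, y) ∈ hat B) :
    hat A = hat B := by
  obtain ⟨ea, heaE, hAeq⟩ := hA
  obtain ⟨eb, hebE, hBeq⟩ := hB
  have hhatA : ∀ e : V × V, e ∈ hat A ↔ Hg E ea e := by
    intro e
    rw [hAeq]
    constructor
    · rintro (h | h)
      · exact Or.inl h
      · exact Or.inr h
    · rintro (h | h)
      · exact Or.inl h
      · exact Or.inr h
  have hhatB : ∀ e : V × V, e ∈ hat B ↔ Hg E eb e := by
    intro e
    rw [hBeq]
    constructor
    · rintro (h | h)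
      · exact Or.inl h
      · exact Or.inr h
    · rintro (h | h)
      · exact Or.inl h
      · exact Or.inr h
  obtain ⟨xa, hxa, ya, hya, hAm⟩ := hAedge
  obtain ⟨xb, hxb, yb, hyb, hBm⟩ := hBedge
  have hA1 : Hg E ea (xa, ya) := (hhatA _).mp hAm
  have hB1 : Hg E eb (xb, yb) := (hhatB _).mp hBm
  have heA : (xa, ya) ∈ E := Hg_mem hG heaE hA1
  have heB : (xb, yb) ∈ E := Hg_mem hG hebE hB1
  have hdisj' := Set.eq_empty_iff_forall_notMem.mp hdisj
  have hyaX : ya ∉ X := fun h => hdisj' ya ⟨h, hya⟩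
  have hxbY : xb ∉ Y := fun h => hdisj' xb ⟨hxb, h⟩
  have exbya : (xb, ya) ∈ E := (hX.1 xa hxa xb hxb ya hyaX).mp heA
  have h1 : Hg E (xa, ya) (xb, ya) := same_color_common hG hX hxa hxb hyaX heA exbya
  have eyaxb : (ya, xb) ∈ E := (hG.2 _ _).mp exbya
  have eybxb : (yb, xb) ∈ E := (hG.2 _ _).mp heB
  have h2' : Hg E (ya, xb) (yb, xb) := same_color_common hG hY hya hyb hxbY eyaxb eybxb
  have h2 : Hg E (xb, ya) (xb, yb) := Hg_swap hG h2'
  have hab : Hg E ea eb :=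
    Hg_trans hG hA1 (Hg_trans hG h1 (Hg_trans hG h2 (Hg_symm hG hB1)))
  ext e
  rw [hhatA e, hhatB e]
  exact ⟨fun h => Hg_trans hG (Hg_symm hG hab) h, fun h => Hg_trans hG hab h⟩
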